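/- Let n ≥ 6 be even and t₁, t₂, t₃ in Sym(2n) as above. Then ⟨t₁,t₂⟩ ∩ ⟨t₂,t₃⟩ = ⟨t₂⟩. -/

import Mathlib

def sp (a b m : ℕ) : Equiv.Perm ℕ :=
  ((List.range m).map fun k => Equiv.swap (a + 2*k) (a + 2*k + 1) *
    Equiv.swap (b + 2*k) (b + 2*k + 1)).prod

lemma sp_apply (a b m : ℕ) (ha : 1 ≤ a) (hab : a + 2*m + 1 ≤ b) (x : ℕ) :
    sp a b m x = if a ≤ x ∧ x <  a + 2*m then (if (x - a) % 2 = 0 then x + 1 else x - 1)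
      else if b ≤ x ∧ x < b + 2*m then (if (x - b) % 2 = 0 then x + 1 else x - 1) else x := by
  induction m generalizing x with
  | zero =>
    simp only [sp, List.range_zero, List.map_nil, List.prod_nil, Equiv.Perm.coe_one, id_eq]
    split_ifs <;> first | omega | exact False.elim ‹False›
  | succ m ih =>
    have hab' : a + 2*m + 1 ≤ b := by omega
    have IH : ∀ y, sp a b m y = if a ≤ y ∧ y <  a + 2*m then (if (y - a) % 2 = 0 then y + 1 else y - 1)
      else if b ≤ y ∧ y < b + 2*m then (if (y - b) % 2 = 0 then y + 1 else y - 1) else y := by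
      intro y; exact ih hab' y
    have key : sp a b (m+1) x = sp a b m
        ((Equiv.swap (a + 2*m) (a + 2*m + 1) * Equiv.swap (b + 2*m) (b + 2*m + 1)) x) := by
      rw [sp, List.range_succ, List.map_append, List.prod_append]
      simp [sp]
    have hg : (Equiv.swap (a + 2*m) (a+2*m+1) * Equiv.swap (b+2*m) (b+2*m+1)) x =
        if x = a+2*m then a+2*m+1 else if x = a+2*m+1 then a+2*m
        else if x = b+2*m then b+2*m+1 else if x = b+2*m+1 then b+2*m else x := by
      rw [Equiv.Perm.mul_apply, Equiv.swap_apply_def, Equiv.swap_apply_def]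
      split_ifs <;> first | omega | exact False.elim ‹False›
    rw [key, hg]
    split_ifs with h1 h2 h3 h4 <;> rw [IH] <;> split_ifs <;> first | omega | exact False.elim ‹False›

/-- `t₁ = (1,2)(n+1,n+2)(n-1,2n-1)(n,2n)` -/
def u1 (n : ℕ) : Equiv.Perm ℕ :=
  Equiv.swap 1 2 * Equiv.swap (n + 1) (n + 2) *
    Equiv.swap (n - 1) (2 * n - 1) * Equiv.swap n (2 * n)

/-- `t₂ = (2,3)(4,5)⋯(n-2,n-1)(n+2,n+3)⋯(2n-2,2n-1)` -/
def u2 (n : ℕ) : Equiv.Perm ℕ :=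
  ((List.range ((n - 2) / 2)).map fun k =>
    Equiv.swap (2 * (k + 1)) (2 * (k + 1) + 1) *
      Equiv.swap (n + 2 * (k + 1)) (n + 2 * (k + 1) + 1)).prod

/-- `t₃ = (3,4)(5,6)⋯(n-1,n)(n+3,n+4)⋯(2n-1,2n)` -/
def u3 (n : ℕ) : Equiv.Perm ℕ :=
  ((List.range ((n - 2) / 2)).map fun k =>
    Equiv.swap (2 * (k + 1) + 1) (2 * (k + 1) + 2) *
      Equiv.swap (n + 2 * (k + 1) + 1) (n + 2 * (k + 1) + 2)).prod

lemma u2_eq_sp (n : ℕ) : u2 n = sp 2 (n+2) ((n-2)/2) := by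
  unfold u2 sp
  congr 1
  apply List.map_congr_left
  intro k _
  have e1 : 2*(k+1) = 2+2*k := by ring
  have e2 : n+2*(k+1) = (n+2)+2*k := by ring
  rw [e1]
  ring_nf

lemma u3_eq_sp (n : ℕ) : u3 n = sp 3 (n+3) ((n-2)/2) := by
  unfold u3 sp
  congr 1
  apply List.map_congr_left
  intro k _
  have e1 : 2*(k+1)+1 = 3+2*k := by ring
  have e2 : n+2*(k+1)+1 = (n+3)+2*k := by ring
  rw [e1, e2]
  ring_nf

lemma u2_apply (n : ℕ) (hn : 6 ≤ n) (he : Even n) (x : ℕ) :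
    u2 n x = if 2 ≤ x ∧ x < n then (if x % 2 = 0 then x + 1 else x - 1)
      else if n + 2 ≤ x ∧ x < 2*n then (if x % 2 = 0 then x + 1 else x - 1) else x := by
  obtain ⟨c, hc⟩ := he
  have h1 : (n-2)/2 = c - 1 := by omega
  rw [u2_eq_sp, sp_apply 2 (n+2) ((n-2)/2) (by omega) (by omega) x, h1]
  have h2 : 2 + 2*(c-1) = n := by omega
  have h3 : n + 2 + 2*(c-1) = 2*n := by omega
  rw [h2, h3]
  split_ifs <;> first | omega | exact False.elim ‹False›

lemma u3_apply (n : ℕ) (hn : 6 ≤ n) (he : Even n) (x : ℕ) :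
    u3 n x = if 3 ≤ x ∧ x < n + 1 then (if x % 2 = 1 then x + 1 else x - 1)
      else if n + 3 ≤ x ∧ x < 2*n + 1 then (if x % 2 = 1 then x + 1 else x - 1) else x := by
  obtain ⟨c, hc⟩ := he
  have h1 : (n-2)/2 = c - 1 := by omega
  rw [u3_eq_sp, sp_apply 3 (n+3) ((n-2)/2) (by omega) (by omega) x, h1]
  have h2 : 3 + 2*(c-1) = n + 1 := by omega
  have h3 : n + 3 + 2*(c-1) = 2*n + 1 := by omega
  rw [h2, h3]
  split_ifs <;> first | omega | exact False.elim ‹False›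

set_option maxHeartbeats 1000000 in
lemma u1_apply (n : ℕ) (hn : 6 ≤ n) (x : ℕ) :
    u1 n x = if x = 1 then 2 else if x = 2 then 1
      else if x = n+1 then n+2 else if x = n+2 then n+1
      else if x = n-1 then 2*n-1 else if x = 2*n-1 then n-1
      else if x = n then 2*n else if x = 2*n then n else x := by
  have sw : ∀ a b y : ℕ, y ≠ a → y ≠ b → Equiv.swap a b y = y :=
    fun a b y h1 h2 => Equiv.swap_apply_of_ne_of_ne h1 h2
  rw [u1, Equiv.Perm.mul_apply, Equiv.Perm.mul_apply, Equiv.Perm.mul_apply]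
  by_cases h1 : x = 1
  · rw [h1]
    rw [sw (n) (2*n) (1) (by omega) (by omega),
      sw (n-1) (2*n-1) (1) (by omega) (by omega),
      sw (n+1) (n+2) (1) (by omega) (by omega),
      Equiv.swap_apply_left]
    split_ifs <;> first | omega | exact False.elim ‹False›
  by_cases h2 : x = 2
  · rw [h2]
    rw [sw (n) (2*n) (2) (by omega) (by omega),
      sw (n-1) (2*n-1) (2) (by omega) (by omega),
      sw (n+1) (n+2) (2) (by omega) (by omega),
      Equiv.swap_apply_right]
    split_ifs <;> first | omega | exact False.elim ‹False›
  by_cases h3 : x = n+1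
  · rw [h3]
    rw [sw (n) (2*n) (n+1) (by omega) (by omega),
      sw (n-1) (2*n-1) (n+1) (by omega) (by omega),
      Equiv.swap_apply_left,
      sw (1) (2) (n+2) (by omega) (by omega)]
    split_ifs <;> first | omega | exact False.elim ‹False›
  by_cases h4 : x = n+2
  · rw [h4]
    rw [sw (n) (2*n) (n+2) (by omega) (by omega),
      sw (n-1) (2*n-1) (n+2) (by omega) (by omega),
      Equiv.swap_apply_right,
      sw (1) (2) (n+1) (by omega) (by omega)]
    split_ifs <;> first | omega | exact False.elim ‹False›
  by_cases h5 : x = n-1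
  · rw [h5]
    rw [sw (n) (2*n) (n-1) (by omega) (by omega),
      Equiv.swap_apply_left,
      sw (n+1) (n+2) (2*n-1) (by omega) (by omega),
      sw (1) (2) (2*n-1) (by omega) (by omega)]
    split_ifs <;> first | omega | exact False.elim ‹False›
  by_cases h6 : x = 2*n-1
  · rw [h6]
    rw [sw (n) (2*n) (2*n-1) (by omega) (by omega),
      Equiv.swap_apply_right,
      sw (n+1) (n+2) (n-1) (by omega) (by omega),
      sw (1) (2) (n-1) (by omega) (by omega)]
    split_ifs <;> first | omega | exact False.elim ‹False›
  by_cases h7 : x = n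
  · rw [h7]
    rw [Equiv.swap_apply_left,
      sw (n-1) (2*n-1) (2*n) (by omega) (by omega),
      sw (n+1) (n+2) (2*n) (by omega) (by omega),
      sw (1) (2) (2*n) (by omega) (by omega)]
    split_ifs <;> first | omega | exact False.elim ‹False›
  by_cases h8 : x = 2*n
  · rw [h8]
    rw [Equiv.swap_apply_right,
      sw (n-1) (2*n-1) (n) (by omega) (by omega),
      sw (n+1) (n+2) (n) (by omega) (by omega),
      sw (1) (2) (n) (by omega) (by omega)]
    split_ifs <;> first | omega | exact False.elim ‹False›
  · rw [sw (n) (2*n) (x) (by omega) (by omega),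
      sw (n-1) (2*n-1) (x) (by omega) (by omega),
      sw (n+1) (n+2) (x) (by omega) (by omega),
      sw (1) (2) (x) (by omega) (by omega)]
    split_ifs <;> first | omega | exact False.elim ‹False›

def rr (n : ℕ) : Equiv.Perm ℕ := u1 n * u2 n

lemma rr_step (n : ℕ) (p q z : ℕ) (h2 : u2 n p = q) (h1 : u1 n q = z) : rr n p = z := by
  rw [rr, Equiv.Perm.mul_apply, h2, h1]

lemma fix_pow (g : Equiv.Perm ℕ) (x : ℕ) (h : g x = x) (m : ℕ) : (g^m) x = x := by
  induction m with
  | zero => simp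
  | succ m ih => rw [pow_succ, Equiv.Perm.mul_apply, h, ih]

lemma pow2_apply (g : Equiv.Perm ℕ) (x : ℕ) : (g^2) x = g (g x) := by
  rw [pow_two, Equiv.Perm.mul_apply]

lemma pow3_apply (g : Equiv.Perm ℕ) (x : ℕ) : (g^3) x = g (g (g x)) := by
  rw [show (3:ℕ) = 2+1 from rfl, pow_succ, Equiv.Perm.mul_apply, pow2_apply]

lemma pow4_apply (g : Equiv.Perm ℕ) (x : ℕ) : (g^4) x = g (g (g (g x))) := by
  rw [show (4:ℕ) = 3+1 from rfl, pow_succ, Equiv.Perm.mul_apply, pow3_apply]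

lemma ro1 {n : ℕ} (hn : 6 ≤ n) (he : Even n) : rr n 1 = 2 := by
  obtain ⟨c0, hc0⟩ := id he
  exact rr_step n 1 1 2 (by rw [u2_apply n hn he]; split_ifs <;> first | omega | exact False.elim ‹False›)
    (by rw [u1_apply n hn]; split_ifs <;> first | omega | exact False.elim ‹False›)

lemma ro2 {n : ℕ} (hn : 6 ≤ n) (he : Even n) : rr n 2 = 3 := by
  obtain ⟨c0, hc0⟩ := id he
  exact rr_step n 2 3 3 (by rw [u2_apply n hn he]; split_ifs <;> first | omega | exact False.elim ‹False›)
    (by rw [u1_apply n hn]; split_ifs <;> first | omega | exact False.elim ‹False›)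

lemma ro3 {n : ℕ} (hn : 6 ≤ n) (he : Even n) : rr n 3 = 1 := by
  obtain ⟨c0, hc0⟩ := id he
  exact rr_step n 3 2 1 (by rw [u2_apply n hn he]; split_ifs <;> first | omega | exact False.elim ‹False›)
    (by rw [u1_apply n hn]; split_ifs <;> first | omega | exact False.elim ‹False›)

lemma ron {n : ℕ} (hn : 6 ≤ n) (he : Even n) : rr n n = 2*n := by
  obtain ⟨c0, hc0⟩ := id he
  exact rr_step n n n (2*n) (by rw [u2_apply n hn he]; split_ifs <;> first | omega | exact False.elim ‹False›)
    (by rw [u1_apply n hn]; split_ifs <;> first | omega | exact False.elim ‹False›)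

lemma ro2n {n : ℕ} (hn : 6 ≤ n) (he : Even n) : rr n (2*n) = n := by
  obtain ⟨c0, hc0⟩ := id he
  exact rr_step n (2*n) (2*n) n (by rw [u2_apply n hn he]; split_ifs <;> first | omega | exact False.elim ‹False›)
    (by rw [u1_apply n hn]; split_ifs <;> first | omega | exact False.elim ‹False›)

lemma ron1 {n : ℕ} (hn : 6 ≤ n) (he : Even n) : rr n (n+1) = n+2 := by
  obtain ⟨c0, hc0⟩ := id he
  exact rr_step n (n+1) (n+1) (n+2) (by rw [u2_apply n hn he]; split_ifs <;> first | omega | exact False.elim ‹False›)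
    (by rw [u1_apply n hn]; split_ifs <;> first | omega | exact False.elim ‹False›)

lemma ron2 {n : ℕ} (hn : 6 ≤ n) (he : Even n) : rr n (n+2) = n+3 := by
  obtain ⟨c0, hc0⟩ := id he
  exact rr_step n (n+2) (n+3) (n+3) (by rw [u2_apply n hn he]; split_ifs <;> first | omega | exact False.elim ‹False›)
    (by rw [u1_apply n hn]; split_ifs <;> first | omega | exact False.elim ‹False›)

lemma ron3 {n : ℕ} (hn : 6 ≤ n) (he : Even n) : rr n (n+3) = n+1 := by
  obtain ⟨c0, hc0⟩ := id he
  exact rr_step n (n+3) (n+2) (n+1) (by rw [u2_apply n hn he]; split_ifs <;> first | omega | exact False.elim ‹False›)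
    (by rw [u1_apply n hn]; split_ifs <;> first | omega | exact False.elim ‹False›)

lemma roa {n : ℕ} (hn : 6 ≤ n) (he : Even n) : rr n (n-2) = 2*n-1 := by
  obtain ⟨c0, hc0⟩ := id he
  exact rr_step n (n-2) (n-1) (2*n-1) (by rw [u2_apply n hn he]; split_ifs <;> first | omega | exact False.elim ‹False›)
    (by rw [u1_apply n hn]; split_ifs <;> first | omega | exact False.elim ‹False›)

lemma rob {n : ℕ} (hn : 6 ≤ n) (he : Even n) : rr n (2*n-1) = 2*n-2 := by
  obtain ⟨c0, hc0⟩ := id he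
  exact rr_step n (2*n-1) (2*n-2) (2*n-2) (by rw [u2_apply n hn he]; split_ifs <;> first | omega | exact False.elim ‹False›)
    (by rw [u1_apply n hn]; split_ifs <;> first | omega | exact False.elim ‹False›)

lemma roc {n : ℕ} (hn : 6 ≤ n) (he : Even n) : rr n (2*n-2) = n-1 := by
  obtain ⟨c0, hc0⟩ := id he
  exact rr_step n (2*n-2) (2*n-1) (n-1) (by rw [u2_apply n hn he]; split_ifs <;> first | omega | exact False.elim ‹False›)
    (by rw [u1_apply n hn]; split_ifs <;> first | omega | exact False.elim ‹False›)

lemma rod {n : ℕ} (hn : 6 ≤ n) (he : Even n) : rr n (n-1) = n-2 := by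
  obtain ⟨c0, hc0⟩ := id he
  exact rr_step n (n-1) (n-2) (n-2) (by rw [u2_apply n hn he]; split_ifs <;> first | omega | exact False.elim ‹False›)
    (by rw [u1_apply n hn]; split_ifs <;> first | omega | exact False.elim ‹False›)

lemma rofix {n : ℕ} (hn : 6 ≤ n) (he : Even n) {x : ℕ} (hx : x = 0 ∨ 2*n+1 ≤ x) : rr n x = x := by
  obtain ⟨c0, hc0⟩ := id he
  exact rr_step n x x x (by rw [u2_apply n hn he]; split_ifs <;> first | omega | exact False.elim ‹False›)
    (by rw [u1_apply n hn]; split_ifs <;> first | omega | exact False.elim ‹False›)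

set_option maxHeartbeats 1000000 in
lemma rolow {n : ℕ} (hn : 6 ≤ n) (he : Even n) {x : ℕ} (hx : 4 ≤ x ∧ x ≤ n-3) : rr n (rr n x) = x := by
  obtain ⟨c0, hc0⟩ := id he
  rcases Nat.even_or_odd x with hp | hp
  · obtain ⟨c, hc⟩ := hp
    have e1 : rr n x = x+1 :=
      rr_step n x (x+1) (x+1) (by rw [u2_apply n hn he]; split_ifs <;> first | omega | exact False.elim ‹False›)
        (by rw [u1_apply n hn]; split_ifs <;> first | omega | exact False.elim ‹False›)
    have e2 : rr n (x+1) = x :=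
      rr_step n (x+1) x x (by rw [u2_apply n hn he]; split_ifs <;> first | omega | exact False.elim ‹False›)
        (by rw [u1_apply n hn]; split_ifs <;> first | omega | exact False.elim ‹False›)
    rw [e1, e2]
  · obtain ⟨c, hc⟩ := hp
    have e1 : rr n x = x-1 :=
      rr_step n x (x-1) (x-1) (by rw [u2_apply n hn he]; split_ifs <;> first | omega | exact False.elim ‹False›)
        (by rw [u1_apply n hn]; split_ifs <;> first | omega | exact False.elim ‹False›)
    have e2 : rr n (x-1) = x :=
      rr_step n (x-1) x x (by rw [u2_apply n hn he]; split_ifs <;> first | omega | exact False.elim ‹False›)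
        (by rw [u1_apply n hn]; split_ifs <;> first | omega | exact False.elim ‹False›)
    rw [e1, e2]

set_option maxHeartbeats 1000000 in
lemma rohigh {n : ℕ} (hn : 6 ≤ n) (he : Even n) {x : ℕ} (hx : n+4 ≤ x ∧ x ≤ 2*n-3) : rr n (rr n x) = x := by
  obtain ⟨c0, hc0⟩ := id he
  rcases Nat.even_or_odd x with hp | hp
  · obtain ⟨c, hc⟩ := hp
    have e1 : rr n x = x+1 :=
      rr_step n x (x+1) (x+1) (by rw [u2_apply n hn he]; split_ifs <;> first | omega | exact False.elim ‹False›)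
        (by rw [u1_apply n hn]; split_ifs <;> first | omega | exact False.elim ‹False›)
    have e2 : rr n (x+1) = x :=
      rr_step n (x+1) x x (by rw [u2_apply n hn he]; split_ifs <;> first | omega | exact False.elim ‹False›)
        (by rw [u1_apply n hn]; split_ifs <;> first | omega | exact False.elim ‹False›)
    rw [e1, e2]
  · obtain ⟨c, hc⟩ := hp
    have e1 : rr n x = x-1 :=
      rr_step n x (x-1) (x-1) (by rw [u2_apply n hn he]; split_ifs <;> first | omega | exact False.elim ‹False›)
        (by rw [u1_apply n hn]; split_ifs <;> first | omega | exact False.elim ‹False›)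
    have e2 : rr n (x-1) = x :=
      rr_step n (x-1) x x (by rw [u2_apply n hn he]; split_ifs <;> first | omega | exact False.elim ‹False›)
        (by rw [u1_apply n hn]; split_ifs <;> first | omega | exact False.elim ‹False›)
    rw [e1, e2]



lemma w1 {n : ℕ} (hn : 6 ≤ n) : u1 n 1 = 2 := by
  rw [u1_apply n hn]; split_ifs <;> first | omega | exact False.elim ‹False›
lemma w2 {n : ℕ} (hn : 6 ≤ n) : u1 n 2 = 1 := by
  rw [u1_apply n hn]; split_ifs <;> first | omega | exact False.elim ‹False›
lemma w3 {n : ℕ} (hn : 6 ≤ n) : u1 n (n+1) = n+2 := by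
  rw [u1_apply n hn]; split_ifs <;> first | omega | exact False.elim ‹False›
lemma w4 {n : ℕ} (hn : 6 ≤ n) : u1 n (n+2) = n+1 := by
  rw [u1_apply n hn]; split_ifs <;> first | omega | exact False.elim ‹False›
lemma w5 {n : ℕ} (hn : 6 ≤ n) : u1 n (n-1) = 2*n-1 := by
  rw [u1_apply n hn]; split_ifs <;> first | omega | exact False.elim ‹False›
lemma w6 {n : ℕ} (hn : 6 ≤ n) : u1 n (2*n-1) = n-1 := by
  rw [u1_apply n hn]; split_ifs <;> first | omega | exact False.elim ‹False›
lemma w7 {n : ℕ} (hn : 6 ≤ n) : u1 n n = 2*n := by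
  rw [u1_apply n hn]; split_ifs <;> first | omega | exact False.elim ‹False›
lemma w8 {n : ℕ} (hn : 6 ≤ n) : u1 n (2*n) = n := by
  rw [u1_apply n hn]; split_ifs <;> first | omega | exact False.elim ‹False›
lemma w9 {n : ℕ} (hn : 6 ≤ n) {x : ℕ} (hx : x ≠ 1 ∧ x ≠ 2 ∧ x ≠ n+1 ∧ x ≠ n+2 ∧
    x ≠ n-1 ∧ x ≠ 2*n-1 ∧ x ≠ n ∧ x ≠ 2*n) : u1 n x = x := by
  rw [u1_apply n hn]; split_ifs <;> first | omega | exact False.elim ‹False›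

lemma u1_sq {n : ℕ} (hn : 6 ≤ n) : u1 n * u1 n = 1 := by
  ext x
  rw [Equiv.Perm.mul_apply, Equiv.Perm.one_apply]
  by_cases h1 : x = 1
  · rw [h1, w1 hn, w2 hn]
  by_cases h2 : x = 2
  · rw [h2, w2 hn, w1 hn]
  by_cases h3 : x = n+1
  · rw [h3, w3 hn, w4 hn]
  by_cases h4 : x = n+2
  · rw [h4, w4 hn, w3 hn]
  by_cases h5 : x = n-1
  · rw [h5, w5 hn, w6 hn]
  by_cases h6 : x = 2*n-1
  · rw [h6, w6 hn, w5 hn]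
  by_cases h7 : x = n
  · rw [h7, w7 hn, w8 hn]
  by_cases h8 : x = 2*n
  · rw [h8, w8 hn, w7 hn]
  · have hw : u1 n x = x := w9 hn (by omega)
    rw [hw, hw]

lemma u2_sq {n : ℕ} (hn : 6 ≤ n) (he : Even n) : u2 n * u2 n = 1 := by
  ext x
  rw [Equiv.Perm.mul_apply, Equiv.Perm.one_apply]
  obtain ⟨c0, hc0⟩ := id he
  by_cases h1 : (2 ≤ x ∧ x < n) ∨ (n + 2 ≤ x ∧ x < 2*n)
  · rcases Nat.even_or_odd x with ⟨c, hc⟩ | ⟨c, hc⟩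
    · have a : u2 n x = x+1 := by
        rw [u2_apply n hn he]; split_ifs <;> first | omega | exact False.elim ‹False›
      have b : u2 n (x+1) = x := by
        rw [u2_apply n hn he]; split_ifs <;> first | omega | exact False.elim ‹False›
      rw [a, b]
    · have a : u2 n x = x-1 := by
        rw [u2_apply n hn he]; split_ifs <;> first | omega | exact False.elim ‹False›
      have b : u2 n (x-1) = x := by
        rw [u2_apply n hn he]; split_ifs <;> first | omega | exact False.elim ‹False›
      rw [a, b]
  · have a : u2 n x = x := by
      rw [u2_apply n hn he]; split_ifs <;> first | omega | exact False.elim ‹False›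
    rw [a, a]

lemma u2_one {n : ℕ} (hn : 6 ≤ n) (he : Even n) : u2 n 1 = 1 := by
  rw [u2_apply n hn he]; split_ifs <;> first | omega | exact False.elim ‹False›

lemma u3_one {n : ℕ} (hn : 6 ≤ n) (he : Even n) : u3 n 1 = 1 := by
  rw [u3_apply n hn he]; split_ifs <;> first | omega | exact False.elim ‹False›

lemma u2_pres {n : ℕ} (hn : 6 ≤ n) (he : Even n) (x : ℕ) : u2 n x ≤ n ↔ x ≤ n := by
  obtain ⟨c0, hc0⟩ := id he
  rw [u2_apply n hn he]; split_ifs <;> first | omega | exact False.elim ‹False›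

lemma u3_pres {n : ℕ} (hn : 6 ≤ n) (he : Even n) (x : ℕ) : u3 n x ≤ n ↔ x ≤ n := by
  obtain ⟨c0, hc0⟩ := id he
  rw [u3_apply n hn he]; split_ifs <;> first | omega | exact False.elim ‹False›

lemma r12 {n : ℕ} (hn : 6 ≤ n) (he : Even n) : rr n ^ 12 = 1 := by
  ext x
  rw [Equiv.Perm.one_apply]
  obtain ⟨c0, hc0⟩ := id he
  by_cases hA : x = 0 ∨ 2*n+1 ≤ x
  · exact fix_pow _ _ (rofix hn he hA) 12
  by_cases hB : x = 1 ∨ x = 2 ∨ x = 3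
  · have h3 : (rr n ^ 3) x = x := by
      rcases hB with h|h|h <;> subst h <;> rw [pow3_apply]
      · rw [ro1 hn he, ro2 hn he, ro3 hn he]
      · rw [ro2 hn he, ro3 hn he, ro1 hn he]
      · rw [ro3 hn he, ro1 hn he, ro2 hn he]
    rw [show (12:ℕ) = 3*4 from rfl, pow_mul]
    exact fix_pow _ _ h3 4
  by_cases hC : x = n ∨ x = 2*n
  · have h2 : (rr n ^ 2) x = x := by
      rcases hC with h|h <;> subst h <;> rw [pow2_apply]
      · rw [ron hn he, ro2n hn he]
      · rw [ro2n hn he, ron hn he]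
    rw [show (12:ℕ) = 2*6 from rfl, pow_mul]
    exact fix_pow _ _ h2 6
  by_cases hD : x = n+1 ∨ x = n+2 ∨ x = n+3
  · have h3 : (rr n ^ 3) x = x := by
      rcases hD with h|h|h <;> subst h <;> rw [pow3_apply]
      · rw [ron1 hn he, ron2 hn he, ron3 hn he]
      · rw [ron2 hn he, ron3 hn he, ron1 hn he]
      · rw [ron3 hn he, ron1 hn he, ron2 hn he]
    rw [show (12:ℕ) = 3*4 from rfl, pow_mul]
    exact fix_pow _ _ h3 4
  by_cases hE : x = n-2 ∨ x = 2*n-1 ∨ x = 2*n-2 ∨ x = n-1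
  · have h4 : (rr n ^ 4) x = x := by
      rcases hE with h|h|h|h <;> subst h <;> rw [pow4_apply]
      · rw [roa hn he, rob hn he, roc hn he, rod hn he]
      · rw [rob hn he, roc hn he, rod hn he, roa hn he]
      · rw [roc hn he, rod hn he, roa hn he, rob hn he]
      · rw [rod hn he, roa hn he, rob hn he, roc hn he]
    rw [show (12:ℕ) = 4*3 from rfl, pow_mul]
    exact fix_pow _ _ h4 3
  by_cases hF : 4 ≤ x ∧ x ≤ n-3
  · have h2 : (rr n ^ 2) x = x := by rw [pow2_apply]; exact rolow hn he hF
    rw [show (12:ℕ) = 2*6 from rfl, pow_mul]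
    exact fix_pow _ _ h2 6
  · have hG : n+4 ≤ x ∧ x ≤ 2*n-3 := by omega
    have h2 : (rr n ^ 2) x = x := by rw [pow2_apply]; exact rohigh hn he hG
    rw [show (12:ℕ) = 2*6 from rfl, pow_mul]
    exact fix_pow _ _ h2 6

lemma rel {n : ℕ} (hn : 6 ≤ n) (he : Even n) : u2 n * rr n * u2 n = (rr n)⁻¹ := by
  have h1 : (u1 n)⁻¹ = u1 n := inv_eq_of_mul_eq_one_right (u1_sq hn)
  have h2 : (u2 n)⁻¹ = u2 n := inv_eq_of_mul_eq_one_right (u2_sq hn he)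
  rw [rr, mul_inv_rev, h1, h2, mul_assoc, mul_assoc, u2_sq hn he, mul_one]

lemma rconj_pow {n : ℕ} (hn : 6 ≤ n) (he : Even n) (k : ℕ) :
    u2 n * rr n ^ k * u2 n = ((rr n)⁻¹) ^ k := by
  induction k with
  | zero => rw [pow_zero, pow_zero, mul_one, u2_sq hn he]
  | succ k ih =>
    have e : u2 n * rr n ^ (k+1) * u2 n = (u2 n * rr n ^ k * u2 n) * (u2 n * rr n * u2 n) := by
      rw [pow_succ]
      simp only [mul_assoc]
      congr 2
      rw [← mul_assoc, u2_sq hn he, one_mul]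
    rw [e, ih, rel hn he, ← pow_succ]

lemma rpow_inv {n : ℕ} (hn : 6 ≤ n) (he : Even n) (k : ℕ) :
    ((rr n) ^ k)⁻¹ = rr n ^ (11*k) := by
  apply inv_eq_of_mul_eq_one_right
  rw [← pow_add, show k + 11*k = 12*k by ring, pow_mul, r12 hn he, one_pow]

lemma rconj_pow' {n : ℕ} (hn : 6 ≤ n) (he : Even n) (k : ℕ) :
    u2 n * rr n ^ k * u2 n = rr n ^ (11*k) := by
  rw [rconj_pow hn he, inv_pow, rpow_inv hn he]

lemma swapmove {n : ℕ} (hn : 6 ≤ n) (he : Even n) (k : ℕ) :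
    u2 n * rr n ^ k = rr n ^ (11*k) * u2 n := by
  rw [← rconj_pow' hn he, mul_assoc, u2_sq hn he, mul_one]

lemma rk_one {n : ℕ} (hn : 6 ≤ n) (he : Even n) (k : ℕ)
    (h1 : (rr n ^ k) 1 = 1) (hp : ∀ x, (rr n ^ k) x ≤ n ↔ x ≤ n) : rr n ^ k = 1 := by
  have f3 : ∀ y, rr n (rr n (rr n y)) = y → ∀ q, ((rr n ^ 3)^q) y = y := by
    intro y hy q
    exact fix_pow _ _ (by rw [pow3_apply]; exact hy) q
  have f4 : ∀ y, rr n (rr n (rr n (rr n y))) = y → ∀ q, ((rr n ^ 4)^q) y = y := by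
    intro y hy q
    exact fix_pow _ _ (by rw [pow4_apply]; exact hy) q
  have hk3 : k % 3 = 0 := by
    by_contra hcon
    have h31 : k % 3 = 1 ∨ k % 3 = 2 := by omega
    rcases h31 with h31 | h31
    · have : (rr n ^ k) 1 = 2 := by
        rw [show k = 3*(k/3) + 1 by omega, pow_add, Equiv.Perm.mul_apply, pow_one, ro1 hn he, pow_mul]
        exact f3 2 (by rw [ro2 hn he, ro3 hn he, ro1 hn he]) _
      omega
    · have : (rr n ^ k) 1 = 3 := by
        rw [show k = 3*(k/3) + 2 by omega, pow_add, Equiv.Perm.mul_apply, pow2_apply, ro1 hn he, ro2 hn he, pow_mul]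
        exact f3 3 (by rw [ro3 hn he, ro1 hn he, ro2 hn he]) _
      omega
  have hk4 : k % 4 = 0 := by
    by_contra hcon
    have h41 : k % 4 = 1 ∨ k % 4 = 2 ∨ k % 4 = 3 := by omega
    rcases h41 with h41 | h41 | h41
    · have : (rr n ^ k) (n-2) = 2*n-1 := by
        rw [show k = 4*(k/4) + 1 by omega, pow_add, Equiv.Perm.mul_apply, pow_one, roa hn he, pow_mul]
        exact f4 _ (by rw [rob hn he, roc hn he, rod hn he, roa hn he]) _
      have := hp (n-2)
      omega
    · have : (rr n ^ k) (n-2) = 2*n-2 := by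
        rw [show k = 4*(k/4) + 2 by omega, pow_add, Equiv.Perm.mul_apply, pow2_apply, roa hn he, rob hn he, pow_mul]
        exact f4 _ (by rw [roc hn he, rod hn he, roa hn he, rob hn he]) _
      have := hp (n-2)
      omega
    · have : (rr n ^ k) (n-1) = 2*n-2 := by
        rw [show k = 4*(k/4) + 3 by omega, pow_add, Equiv.Perm.mul_apply, pow3_apply, rod hn he, roa hn he, rob hn he, pow_mul]
        exact f4 _ (by rw [roc hn he, rod hn he, roa hn he, rob hn he]) _
      have := hp (n-1)
      omega
  rw [show k = 12 * (k/12) by omega, pow_mul, r12 hn he, one_pow]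

lemma Kfix {n : ℕ} (hn : 6 ≤ n) (he : Even n) {g : Equiv.Perm ℕ}
    (hg : g ∈ Subgroup.closure {u2 n, u3 n}) :
    g 1 = 1 ∧ ∀ x, g x ≤ n ↔ x ≤ n := by
  induction hg using Subgroup.closure_induction with
  | mem x hx =>
    rcases hx with rfl | rfl
    · exact ⟨u2_one hn he, u2_pres hn he⟩
    · exact ⟨u3_one hn he, u3_pres hn he⟩
  | one => simp
  | mul x y hx hy px py =>
    refine ⟨?_, fun z => ?_⟩
    · rw [Equiv.Perm.mul_apply, py.1, px.1]
    · rw [Equiv.Perm.mul_apply]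
      exact (px.2 (y z)).trans (py.2 z)
  | inv x hx px =>
    refine ⟨?_, fun z => ?_⟩
    · conv_lhs => rw [← px.1]
      rw [show ∀ y, x⁻¹ (x y) = y from x.symm_apply_apply]
    · have h := px.2 (x⁻¹ z)
      rw [show ∀ y, x (x⁻¹ y) = y from x.apply_symm_apply] at h
      exact h.symm

/-- For even `n ≥ 6`, `⟨t₁,t₂⟩ ⊓ ⟨t₂,t₃⟩ = ⟨t₂⟩`. -/
theorem stmt12 (n : ℕ) (hn : 6 ≤ n) (he : Even n) :
    Subgroup.closure {u1 n, u2 n} ⊓ Subgroup.closure {u2 n, u3 n}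
      = Subgroup.closure {u2 n} := by
  have h2sq : u2 n * u2 n = 1 := u2_sq hn he
  have hu2mem : u2 n ∈ ({u2 n} : Set (Equiv.Perm ℕ)) := rfl
  apply le_antisymm
  · intro g hg
    obtain ⟨hgH, hgK⟩ := hg
    obtain ⟨hfix, hpres⟩ := Kfix hn he hgK
    -- dihedral structure of the first factor
    have hS : ∃ k : ℕ, g = rr n ^ k ∨ g = rr n ^ k * u2 n := by
      let S : Subgroup (Equiv.Perm ℕ) :=
        { carrier := {g | ∃ k : ℕ, g = rr n ^ k ∨ g = rr n ^ k * u2 n}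
          one_mem' := ⟨0, Or.inl (by rw [pow_zero])⟩
          mul_mem' := by
            rintro a b ⟨j, hj | hj⟩ ⟨k, hk | hk⟩
            · exact ⟨j + k, Or.inl (by rw [hj, hk, ← pow_add])⟩
            · exact ⟨j + k, Or.inr (by rw [hj, hk, ← mul_assoc, ← pow_add])⟩
            · refine ⟨j + 11*k, Or.inr ?_⟩
              rw [hj, hk, mul_assoc, swapmove hn he, ← mul_assoc, ← pow_add]
            · refine ⟨j + 11*k, Or.inl ?_⟩
              rw [hj, hk, mul_assoc, ← mul_assoc (u2 n), swapmove hn he,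
                mul_assoc, h2sq, mul_one, ← pow_add]
          inv_mem' := by
            rintro a ⟨k, hk | hk⟩
            · exact ⟨11*k, Or.inl (by rw [hk, rpow_inv hn he])⟩
            · refine ⟨11*(11*k), Or.inr ?_⟩
              rw [hk, mul_inv_rev, inv_eq_of_mul_eq_one_right h2sq, rpow_inv hn he,
                swapmove hn he] }
      have hle : Subgroup.closure {u1 n, u2 n} ≤ S := by
        rw [Subgroup.closure_le]
        rintro x (rfl | rfl)
        · refine ⟨1, Or.inr ?_⟩
          rw [pow_one, rr, mul_assoc, h2sq, mul_one]
        · exact ⟨0, Or.inr (by rw [pow_zero, one_mul])⟩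
      exact hle hgH
    obtain ⟨k, hk | hk⟩ := hS
    · have h1 : rr n ^ k = 1 := rk_one hn he k (hk ▸ hfix) (fun x => hk ▸ hpres x)
      rw [hk, h1]
      exact Subgroup.one_mem _
    · have hrk : rr n ^ k = g * u2 n := by rw [hk, mul_assoc, h2sq, mul_one]
      have hfix' : (rr n ^ k) 1 = 1 := by
        rw [hrk, Equiv.Perm.mul_apply, u2_one hn he, hfix]
      have hpres' : ∀ x, (rr n ^ k) x ≤ n ↔ x ≤ n := by
        intro x
        rw [hrk, Equiv.Perm.mul_apply]
        exact (hpres (u2 n x)).trans (u2_pres hn he x)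
      have h1 : rr n ^ k = 1 := rk_one hn he k hfix' hpres'
      rw [hk, h1, one_mul]
      exact Subgroup.subset_closure hu2mem
  · apply le_inf
    · apply Subgroup.closure_mono
      intro x hx
      rw [hx]
      right
      rfl
    · apply Subgroup.closure_mono
      intro x hx
      rw [hx]
      left
      rfl
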